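/- Let k ∈ ℕ, let n be a power of 2 with n > k, and let f be a formal power series over a commutative ring R. Then (δ_{k+n} ⊙ f)′ = ( δ_n ⊙ (δ_k ⊙ f)′ ) · (1 + x^n), where the prime denotes the binomial modulo 2 transform. -/

import Mathlib

lemma myadd_eq_or : ∀ N a b : ℕ, a ≤ N → a &&& b = 0 → a + b = a ||| b := by
  intro N
  induction N with
  | zero => intro a b ha h; interval_cases a; simp
  | succ N ih =>
    intro a b ha h
    rcases Nat.eq_zero_or_pos a with h0 | h0
    · subst h0; simp
    have h2 : a / 2 &&& b / 2 = 0 := by rw [← Nat.and_div_two, h]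
    have e1 := ih (a / 2) (b / 2) (by omega) h2
    have e2 : (a ||| b) / 2 = a / 2 ||| b / 2 := Nat.or_div_two
    have e3 : ((a ||| b) % 2 = 1) ↔ (a % 2 = 1 ∨ b % 2 = 1) := Nat.or_mod_two_eq_one
    have e4 : ¬ (a % 2 = 1 ∧ b % 2 = 1) := by
      intro ⟨u, v⟩
      have : (a &&& b) % 2 = 1 := Nat.and_mod_two_eq_one.mpr ⟨u, v⟩
      rw [h] at this; omega
    omega

lemma add_eq_or_of_and_eq_zero {a b : ℕ} (h : a &&& b = 0) : a + b = a ||| b :=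
  myadd_eq_or a a b le_rfl h

lemma or_eq_zero_iff' {a b : ℕ} : a ||| b = 0 ↔ a = 0 ∧ b = 0 := by
  constructor
  · intro h
    constructor <;> apply Nat.eq_of_testBit_eq <;> intro i <;>
      have := congrArg (fun x => Nat.testBit x i) h <;>
      simp only [Nat.testBit_or, Nat.zero_testBit, Bool.or_eq_false_iff] at this <;>
      simp [this.1, this.2]
  · rintro ⟨rfl, rfl⟩; simp

lemma sub_and_eq_zero_iff {j m : ℕ} (hj : j ≤ m) : (m - j) &&& j = 0 ↔ m &&& j = j := by
  constructor
  · intro h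
    have hs : (m - j) + j = (m - j) ||| j := add_eq_or_of_and_eq_zero h
    have hm : m = (m - j) ||| j := by omega
    rw [hm, Nat.and_comm, Nat.and_or_distrib_left]
    have : j &&& (m - j) = 0 := by rw [Nat.and_comm]; exact h
    rw [this]; simp
  · intro h
    have hd : (m ^^^ j) &&& j = 0 := by
      rw [Nat.and_xor_distrib_right, Nat.and_self, h, Nat.xor_self]
    have hsum : (m ^^^ j) + j = (m ^^^ j) ||| j := add_eq_or_of_and_eq_zero hd
    have hor : (m ^^^ j) ||| j = m := by
      apply Nat.eq_of_testBit_eq; intro i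
      have hdi := congrArg (fun x => Nat.testBit x i) hd
      simp only [Nat.testBit_and, Nat.testBit_xor, Nat.testBit_or,
        Nat.zero_testBit] at hdi ⊢
      cases hA : m.testBit i <;> cases hB : j.testBit i <;> simp_all
    have : m - j = m ^^^ j := by omega
    rw [this]; exact hd

lemma sub_eq_xor_of_submask {m n : ℕ} (h : m &&& n = n) : m - n = m ^^^ n := by
  have hd : (m ^^^ n) &&& n = 0 := by
    rw [Nat.and_xor_distrib_right, Nat.and_self, h, Nat.xor_self]
  have hsum : (m ^^^ n) + n = (m ^^^ n) ||| n := add_eq_or_of_and_eq_zero hd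
  have hor : (m ^^^ n) ||| n = m := by
    apply Nat.eq_of_testBit_eq; intro i
    have hb := congrArg (fun x => Nat.testBit x i) h
    simp only [Nat.testBit_and] at hb
    simp only [Nat.testBit_or, Nat.testBit_xor]
    cases hA : m.testBit i <;> cases hB : n.testBit i <;> simp_all
  omega

lemma submask_xor_iff {m n j : ℕ} (hmn : m &&& n = n) :
    (m &&& j = j ∧ j &&& n = 0) ↔ (m ^^^ n) &&& j = j := by
  constructor
  · rintro ⟨h1, h2⟩
    apply Nat.eq_of_testBit_eq; intro i
    have e1 := congrArg (fun x => Nat.testBit x i) h1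
    have e2 := congrArg (fun x => Nat.testBit x i) h2
    have e3 := congrArg (fun x => Nat.testBit x i) hmn
    simp only [Nat.testBit_and, Nat.zero_testBit] at e1 e2 e3
    simp only [Nat.testBit_and, Nat.testBit_xor]
    cases hA : m.testBit i <;> cases hB : n.testBit i <;> cases hC : j.testBit i <;> simp_all
  · intro h
    constructor <;> apply Nat.eq_of_testBit_eq <;> intro i <;>
      have e1 := congrArg (fun x => Nat.testBit x i) h <;>
      have e3 := congrArg (fun x => Nat.testBit x i) hmn <;>
      simp only [Nat.testBit_and, Nat.testBit_xor, Nat.zero_testBit] at e1 e3 ⊢ <;>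
      cases hA : m.testBit i <;> cases hB : n.testBit i <;> cases hC : j.testBit i <;> simp_all

lemma and_two_pow_eq_zero_iff {m t : ℕ} : m &&& 2 ^ t = 0 ↔ m.testBit t = false := by
  rw [Nat.and_two_pow]
  cases h : m.testBit t <;> simp [h, Nat.pow_eq_zero]

lemma and_two_pow_of_ne {m t : ℕ} (h : m &&& 2 ^ t ≠ 0) : m &&& 2 ^ t = 2 ^ t := by
  rw [Nat.and_two_pow] at *
  cases hb : m.testBit t <;> simp_all

lemma sub_div_aux {m P : ℕ} (hP : 0 < P) (h2 : P ≤ m) : (m - P) / P = m / P - 1 := by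
  have hdm := Nat.div_add_mod m P
  have hr : m % P < P := Nat.mod_lt _ hP
  have hq1 : 1 ≤ m / P := (Nat.one_le_div_iff hP).mpr h2
  have hmul : P * (m / P - 1) = P * (m / P) - P := by rw [Nat.mul_sub, Nat.mul_one]
  have ha : P ≤ P * (m / P) := by
    calc P = P * 1 := by ring
    _ ≤ P * (m / P) := Nat.mul_le_mul_left P hq1
  have he : m - P = P * (m / P - 1) + m % P := by rw [hmul]; omega
  rw [he, Nat.mul_add_div hP, Nat.div_eq_of_lt hr]
  omega

lemma testBit_sub_pow {m t : ℕ} (h1 : m.testBit t = false) (h2 : 2 ^ t ≤ m) :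
    (m - 2 ^ t).testBit t = true := by
  have ht : 0 < 2 ^ t := Nat.two_pow_pos t
  rw [Nat.testBit_eq_decide_div_mod_eq] at h1 ⊢
  simp only [decide_eq_false_iff_not, decide_eq_true_eq] at h1 ⊢
  rw [sub_div_aux ht h2]
  have hq1 : 1 ≤ m / 2 ^ t := (Nat.one_le_div_iff ht).mpr h2
  omega


/-- `δ k`: the power series whose `m`-th coefficient is `1` if `m AND k = 0`, else `0`. -/
noncomputable def delta (R : Type*) [CommRing R] (k : ℕ) : PowerSeries R :=
  PowerSeries.mk fun m => if m &&& k = 0 then 1 else 0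

/-- Termwise (Hadamard) product of power series. -/
noncomputable def hadS {R : Type*} [CommRing R] (f g : PowerSeries R) : PowerSeries R :=
  PowerSeries.mk fun n => PowerSeries.coeff n f * PowerSeries.coeff n g

/-- The binomial modulo 2 transform: `f'[n] = Σ_{0≤k≤n, (n-k) AND k = 0} f[k]`. -/
noncomputable def bmt {R : Type*} [CommRing R] (f : PowerSeries R) : PowerSeries R :=
  PowerSeries.mk fun n => ∑ k ∈ Finset.range (n + 1),
    if (n - k) &&& k = 0 then PowerSeries.coeff k f else 0

/-- Let k ∈ ℕ, n a power of 2 with n > k, and f a power series. Then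
(δ (k+n) ⊙ f)' = (δ n ⊙ (δ k ⊙ f)') * (1 + x^n). -/
theorem bmt_delta_add (R : Type*) [CommRing R] (k n : ℕ) (hn : ∃ t : ℕ, n = 2 ^ t)
    (hkn : k < n) (f : PowerSeries R) :
    bmt (hadS (delta R (k + n)) f) =
      hadS (delta R n) (bmt (hadS (delta R k) f)) * (1 + PowerSeries.X ^ n) := by
  obtain ⟨t, rfl⟩ := hn
  have hkn0 : k &&& 2 ^ t = 0 := and_two_pow_eq_zero_iff.mpr (Nat.testBit_lt_two_pow hkn)
  have hksum : k + 2 ^ t = k ||| 2 ^ t := add_eq_or_of_and_eq_zero hkn0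
  have hdecomp : ∀ j : ℕ, (j &&& (k + 2 ^ t) = 0) ↔ (j &&& k = 0 ∧ j &&& 2 ^ t = 0) := by
    intro j
    rw [hksum, Nat.and_or_distrib_left, or_eq_zero_iff']
  ext m
  rw [mul_add, mul_one, map_add, PowerSeries.coeff_mul_X_pow']
  simp only [bmt, hadS, delta, PowerSeries.coeff_mk, ite_mul, one_mul, zero_mul, ← ite_and]
  by_cases hm : m &&& 2 ^ t = 0
  · -- bit t of m is zero
    have hbit : m.testBit t = false := and_two_pow_eq_zero_iff.mp hm
    rw [if_pos hm]
    have hsecond :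
        (if 2 ^ t ≤ m ∧ (m - 2 ^ t) &&& 2 ^ t = 0 then
            ∑ j ∈ Finset.range (m - 2 ^ t + 1),
              if ((m - 2 ^ t - j) &&& j = 0 ∧ j &&& k = 0) then
                (PowerSeries.coeff j) f else 0
          else 0) = 0 := by
      rw [if_neg]
      rintro ⟨hle, hz⟩
      have : (m - 2 ^ t) &&& 2 ^ t ≠ 0 := by
        rw [Ne, and_two_pow_eq_zero_iff]
        simp [testBit_sub_pow hbit hle]
      exact this hz
    rw [hsecond, add_zero]
    apply Finset.sum_congr rfl
    intro j hj
    simp only [Finset.mem_range] at hj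
    by_cases hc : (m - j) &&& j = 0
    · have hsub : m &&& j = j := (sub_and_eq_zero_iff (by omega)).mp hc
      have hjn : j &&& 2 ^ t = 0 := by
        calc j &&& 2 ^ t = (m &&& j) &&& 2 ^ t := by rw [hsub]
          _ = j &&& (m &&& 2 ^ t) := by rw [Nat.and_comm m j, Nat.and_assoc]
          _ = 0 := by rw [hm, Nat.and_zero]
      have hiff : ((m - j) &&& j = 0 ∧ j &&& (k + 2 ^ t) = 0) ↔
          ((m - j) &&& j = 0 ∧ j &&& k = 0) := by
        rw [hdecomp j]
        simp [hjn]
      exact if_congr hiff rfl rfl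
    · have h1 : ¬ ((m - j) &&& j = 0 ∧ j &&& (k + 2 ^ t) = 0) := fun h => hc h.1
      have h2 : ¬ ((m - j) &&& j = 0 ∧ j &&& k = 0) := fun h => hc h.1
      rw [if_neg h1, if_neg h2]
  · -- bit t of m is one
    have hmn : m &&& 2 ^ t = 2 ^ t := and_two_pow_of_ne hm
    have hle : 2 ^ t ≤ m := hmn ▸ Nat.and_le_left
    have hxor : m - 2 ^ t = m ^^^ 2 ^ t := sub_eq_xor_of_submask hmn
    have hzero : (m - 2 ^ t) &&& 2 ^ t = 0 := by
      rw [hxor, Nat.and_xor_distrib_right, Nat.and_self, hmn, Nat.xor_self]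
    rw [if_neg hm, zero_add, if_pos (⟨hle, hzero⟩ : 2 ^ t ≤ m ∧ (m - 2 ^ t) &&& 2 ^ t = 0)]
    have hshrink :
        (∑ j ∈ Finset.range (m + 1),
            if ((m - j) &&& j = 0 ∧ j &&& (k + 2 ^ t) = 0) then (PowerSeries.coeff j) f else 0)
          = ∑ j ∈ Finset.range (m - 2 ^ t + 1),
            if ((m - j) &&& j = 0 ∧ j &&& (k + 2 ^ t) = 0) then (PowerSeries.coeff j) f else 0 := by
      refine (Finset.sum_subset (Finset.range_subset_range.mpr (by omega)) ?_).symm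
      intro x hx hnx
      simp only [Finset.mem_range] at hx hnx
      rw [if_neg]
      rintro ⟨h1, h2⟩
      have hsub : m &&& x = x := (sub_and_eq_zero_iff (by omega)).mp h1
      have hxn : x &&& 2 ^ t = 0 := ((hdecomp x).mp h2).2
      have hxm : (m ^^^ 2 ^ t) &&& x = x := (submask_xor_iff hmn).mp ⟨hsub, hxn⟩
      have : x ≤ m ^^^ 2 ^ t := hxm ▸ Nat.and_le_left
      omega
    rw [hshrink]
    apply Finset.sum_congr rfl
    intro j hj
    simp only [Finset.mem_range] at hj
    have hj2 : j ≤ m - 2 ^ t := by omega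
    have hiff : ((m - j) &&& j = 0 ∧ j &&& (k + 2 ^ t) = 0) ↔
        ((m - 2 ^ t - j) &&& j = 0 ∧ j &&& k = 0) := by
      rw [sub_and_eq_zero_iff (by omega : j ≤ m), sub_and_eq_zero_iff hj2, hdecomp j, hxor]
      constructor
      · rintro ⟨h1, h2, h3⟩
        exact ⟨(submask_xor_iff hmn).mp ⟨h1, h3⟩, h2⟩
      · rintro ⟨h1, h2⟩
        obtain ⟨ha, hb⟩ := (submask_xor_iff hmn).mpr h1
        exact ⟨ha, h2, hb⟩
    exact if_congr hiff rfl rfl
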